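/- Let π be a permutation of [n] with sink s and c a minimal recurrent configuration on the permutation graph G_π. Then the canonical toppling CanonTop(c) = P_0, ..., P_k is a (π,s)-compatible ordered partition of [n]: P_0 = {s}; no two elements of any part P_j form an inversion of π; and for every j ≥ 1 and i ∈ P_j there exists i' ∈ P_{j−1} forming an inversion of π with i. -/

import Mathlib

open Finset
open scoped Classical

def permGraph {n : ℕ} (π : Equiv.Perm (Fin n)) : SimpleGraph (Fin n) :=
  SimpleGraph.fromRel (fun i j => i < j ∧ π.symm j < π.symm i)

noncomputable def topple {n : ℕ} (G : SimpleGraph (Fin n)) (c : Fin n → ℕ) (i : Fin n) :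
    Fin n → ℕ :=
  fun j => if j = i then c j - G.degree i else c j + (if G.Adj i j then 1 else 0)

noncomputable def toppleList {n : ℕ} (G : SimpleGraph (Fin n)) (c : Fin n → ℕ) :
    List (Fin n) → (Fin n → ℕ)
  | [] => c
  | i :: l => toppleList G (topple G c i) l

def ValidTopplings {n : ℕ} (G : SimpleGraph (Fin n)) (c : Fin n → ℕ) :
    List (Fin n) → Prop
  | [] => True
  | i :: l => G.degree i ≤ c i ∧ ValidTopplings G (topple G c i) l

def IsRecurrent {n : ℕ} (G : SimpleGraph (Fin n)) (s : Fin n) (c : Fin n → ℕ) : Prop :=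
  c s = G.degree s ∧ (∀ i, i ≠ s → c i < G.degree i) ∧
    ∃ l : List (Fin n), l.head? = some s ∧ l.Nodup ∧ (∀ v, v ∈ l) ∧
      ValidTopplings G c l ∧ toppleList G c l = c

noncomputable def level {n : ℕ} (G : SimpleGraph (Fin n)) (c : Fin n → ℕ) : ℤ :=
  (∑ i, (c i : ℤ)) - (G.edgeFinset.card : ℤ)

noncomputable def confAfterSet {n : ℕ} (G : SimpleGraph (Fin n)) (c : Fin n → ℕ)
    (D : Finset (Fin n)) (i : Fin n) : ℤ :=
  (c i : ℤ) + ((D.filter (G.Adj i)).card : ℤ) - (if i ∈ D then (G.degree i : ℤ) else 0)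

noncomputable def canonTopCum {n : ℕ} (G : SimpleGraph (Fin n)) (s : Fin n)
    (c : Fin n → ℕ) : ℕ → Finset (Fin n)
  | 0 => {s}
  | k + 1 => canonTopCum G s c k ∪
      Finset.univ.filter (fun i => i ∉ canonTopCum G s c k ∧
        (G.degree i : ℤ) ≤ confAfterSet G c (canonTopCum G s c k) i)

/-- The canonical toppling of `c`: `P 0 = {s}` and `P (k+1)` is the set of (non-sink)
vertices becoming unstable after toppling all of `P 0, …, P k`. -/
noncomputable def canonTopPart {n : ℕ} (G : SimpleGraph (Fin n)) (s : Fin n)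
    (c : Fin n → ℕ) : ℕ → Finset (Fin n)
  | 0 => {s}
  | k + 1 => canonTopCum G s c (k + 1) \ canonTopCum G s c k

section Aux
variable {n : ℕ} (G : SimpleGraph (Fin n)) (s : Fin n) (c : Fin n → ℕ)

lemma cum_zero : canonTopCum G s c 0 = {s} := rfl

lemma cum_succ (k : ℕ) : canonTopCum G s c (k+1) = canonTopCum G s c k ∪
      Finset.univ.filter (fun i => i ∉ canonTopCum G s c k ∧
        (G.degree i : ℤ) ≤ confAfterSet G c (canonTopCum G s c k) i) := rfl

lemma mem_cum_succ_iff (i : Fin n) (m : ℕ) :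
    i ∈ canonTopCum G s c (m+1) ↔ i ∈ canonTopCum G s c m ∨
      (i ∉ canonTopCum G s c m ∧
        (G.degree i : ℤ) ≤ (c i : ℤ) + (((canonTopCum G s c m).filter (G.Adj i)).card : ℤ)) := by
  rw [cum_succ, Finset.mem_union, Finset.mem_filter]
  simp only [Finset.mem_univ, true_and, confAfterSet]
  constructor
  · rintro (h | ⟨h1, h2⟩)
    · exact Or.inl h
    · exact Or.inr ⟨h1, by rwa [if_neg h1, sub_zero] at h2⟩
  · rintro (h | ⟨h1, h2⟩)
    · exact Or.inl h
    · exact Or.inr ⟨h1, by rwa [if_neg h1, sub_zero]⟩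

lemma cum_subset_succ (k : ℕ) : canonTopCum G s c k ⊆ canonTopCum G s c (k+1) := by
  rw [cum_succ]; exact subset_union_left

lemma cum_mono : Monotone (canonTopCum G s c) :=
  monotone_nat_of_le_succ (cum_subset_succ G s c)

lemma cum_stab (K : ℕ) (h : canonTopCum G s c (K+1) = canonTopCum G s c K) :
    ∀ m, canonTopCum G s c (K+m) = canonTopCum G s c K := by
  intro m
  induction m with
  | zero => rfl
  | succ m ih =>
      have : K + (m+1) = (K + m) + 1 := rfl
      rw [this, cum_succ, ih, ← cum_succ]; exact h


lemma toppleList_not_mem (c : Fin n → ℕ) (L : List (Fin n)) (v : Fin n)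
    (hv : v ∉ L) (hnd : L.Nodup) :
    toppleList G c L v = c v + (L.toFinset.filter (fun w => G.Adj w v)).card := by
  induction L generalizing c with
  | nil => simp [toppleList]
  | cons i L ih =>
      have hvi : v ≠ i := by rintro rfl; exact hv List.mem_cons_self
      have hvL : v ∉ L := fun h => hv (List.mem_cons_of_mem _ h)
      have hiL : i ∉ L := (List.nodup_cons.mp hnd).1
      rw [show toppleList G c (i::L) = toppleList G (topple G c i) L from rfl,
        ih _ hvL (List.nodup_cons.mp hnd).2]
      have htv : (topple G c i) v = c v + (if G.Adj i v then 1 else 0) := by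
        simp [topple, hvi]
      rw [htv, List.toFinset_cons, filter_insert]
      by_cases hA : G.Adj i v
      · simp only [if_pos hA]
        rw [card_insert_of_notMem (by simp [hiL])]
        omega
      · simp only [if_neg hA]
        omega

lemma valid_middle (c : Fin n → ℕ) (L R : List (Fin n)) (v : Fin n)
    (h : ValidTopplings G c (L ++ v :: R)) : G.degree v ≤ toppleList G c L v := by
  induction L generalizing c with
  | nil => exact h.1
  | cons i L ih => exact ih _ h.2

lemma exists_stab : ∃ K, canonTopCum G s c (K+1) = canonTopCum G s c K := by
  by_contra hc
  push_neg at hc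
  have hgrow : ∀ k, k + 1 ≤ (canonTopCum G s c k).card := by
    intro k
    induction k with
    | zero => simp [cum_zero]
    | succ k ih =>
        have hss : canonTopCum G s c k ⊂ canonTopCum G s c (k+1) :=
          (cum_subset_succ G s c k).ssubset_of_ne (Ne.symm (hc k))
        have := card_lt_card hss
        omega
  have h1 := hgrow n
  have h2 : (canonTopCum G s c n).card ≤ n := by
    simpa using card_le_univ (canonTopCum G s c n)
  omega

lemma cum_saturates (hrec : IsRecurrent G s c) :
    ∃ K, canonTopCum G s c K = Finset.univ := by
  obtain ⟨K, hK⟩ := exists_stab G s c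
  refine ⟨K, ?_⟩
  obtain ⟨hs, hlt, l, hhead, hnd, hall, hvalid, -⟩ := hrec
  have key : ∀ R L : List (Fin n), l = L ++ R → (∀ x ∈ L, x ∈ canonTopCum G s c K) →
      ∀ x ∈ R, x ∈ canonTopCum G s c K := by
    intro R
    induction R with
    | nil => intro L _ _ x hx; cases hx
    | cons v R ih =>
        intro L hl hL x hx
        have hvK : v ∈ canonTopCum G s c K := by
          by_contra hv
          have hvL : v ∉ L := fun h => hv (hL v h)
          have hndL : L.Nodup := by
            rw [hl] at hnd; exact hnd.of_append_left
          have hval : G.degree v ≤ toppleList G c L v := by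
            apply valid_middle G c L R v; rwa [hl] at hvalid
          rw [toppleList_not_mem G c L v hvL hndL] at hval
          have hsub : L.toFinset.filter (fun w => G.Adj w v) ⊆
              (canonTopCum G s c K).filter (G.Adj v) := by
            intro w hw
            simp only [mem_filter, List.mem_toFinset] at hw ⊢
            exact ⟨hL w hw.1, G.adj_symm hw.2⟩
          have hcard := card_le_card hsub
          have hfin : v ∈ canonTopCum G s c (K+1) := by
            rw [mem_cum_succ_iff]
            refine Or.inr ⟨hv, ?_⟩
            have : G.degree v ≤ c v + ((canonTopCum G s c K).filter (G.Adj v)).card := by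
              omega
            exact_mod_cast this
          rw [hK] at hfin
          exact hv hfin
        rw [List.mem_cons] at hx
        rcases hx with rfl | hx
        · exact hvK
        · refine ih (L ++ [v]) (by rw [hl, List.append_assoc]; rfl) ?_ x hx
          intro y hy
          rcases List.mem_append.mp hy with hy | hy
          · exact hL y hy
          · rw [List.mem_singleton] at hy; subst hy; exact hvK
  rw [eq_univ_iff_forall]
  intro x
  exact key l [] rfl (by simp) x (hall x)

end Aux

theorem main_general {n : ℕ} (G : SimpleGraph (Fin n)) (s : Fin n) (c : Fin n → ℕ)
    (hrec : IsRecurrent G s c) (hmin : level G c = 0) :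
    ∃ k : ℕ,
      canonTopPart G s c 0 = {s} ∧
      (∀ j, j ≤ k → (canonTopPart G s c j).Nonempty) ∧
      (∀ j, k < j → canonTopPart G s c j = ∅) ∧
      (∀ i j, i < j → Disjoint (canonTopPart G s c i) (canonTopPart G s c j)) ∧
      (Finset.range (k + 1)).biUnion (canonTopPart G s c) = Finset.univ ∧
      (∀ j, j ≤ k → ∀ a ∈ canonTopPart G s c j, ∀ b ∈ canonTopPart G s c j, ¬ G.Adj a b) ∧
      (∀ j, 1 ≤ j → j ≤ k → ∀ a ∈ canonTopPart G s c j,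
        ∃ b ∈ canonTopPart G s c (j - 1), G.Adj a b) := by
  have hsat := cum_saturates G s c hrec
  obtain ⟨hcs, hclt, -⟩ := hrec
  classical
  set k := Nat.find hsat with hk
  have hDk : canonTopCum G s c k = univ := Nat.find_spec hsat
  have hmink : ∀ j, j < k → canonTopCum G s c j ≠ univ := fun j hj => Nat.find_min hsat hj
  have hstabk : ∀ m, k ≤ m → canonTopCum G s c m = univ := by
    intro m hm
    have hstep : canonTopCum G s c (k+1) = canonTopCum G s c k := by
      apply subset_antisymm
      · rw [hDk]; exact subset_univ _
      · exact cum_subset_succ G s c k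
    obtain ⟨d, rfl⟩ := Nat.exists_eq_add_of_le hm
    rw [cum_stab G s c k hstep d, hDk]
  have hgrow : ∀ j, j < k → canonTopCum G s c j ⊂ canonTopCum G s c (j+1) := by
    intro j hj
    refine (cum_subset_succ G s c j).ssubset_of_ne ?_
    intro he
    have h2 := cum_stab G s c j he.symm (k - j)
    rw [Nat.add_sub_cancel' (le_of_lt hj)] at h2
    exact hmink j hj (by rw [← h2, hDk])
  have hex : ∀ i : Fin n, ∃ j, i ∈ canonTopCum G s c j := fun i => ⟨k, hDk ▸ mem_univ i⟩
  set part : Fin n → ℕ := fun i => Nat.find (hex i) with hpartdef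
  have hpart_mem : ∀ i, i ∈ canonTopCum G s c (part i) := fun i => Nat.find_spec (hex i)
  have hpart_min : ∀ i j, j < part i → i ∉ canonTopCum G s c j := fun i j hj =>
    Nat.find_min (hex i) hj
  have hpart_le_iff : ∀ i m, i ∈ canonTopCum G s c m ↔ part i ≤ m := by
    intro i m
    constructor
    · intro h; by_contra hm; push_neg at hm; exact hpart_min i m hm h
    · intro h; exact cum_mono G s c h (hpart_mem i)
  have hpart_le_k : ∀ i, part i ≤ k := fun i => (hpart_le_iff i k).1 (hDk ▸ mem_univ i)
  have hpart_s : part s = 0 :=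
    Nat.le_zero.mp ((hpart_le_iff s 0).1 (by rw [cum_zero]; exact mem_singleton_self s))
  have hpart_zero : ∀ i, part i = 0 → i = s := by
    intro i h
    have h2 := hpart_mem i
    rw [h, cum_zero, mem_singleton] at h2
    exact h2
  have hPzero : canonTopPart G s c 0 = {s} := rfl
  have hPsucc : ∀ m, canonTopPart G s c (m+1) =
      canonTopCum G s c (m+1) \ canonTopCum G s c m := fun m => rfl
  have hmemP : ∀ i j, i ∈ canonTopPart G s c j ↔ part i = j := by
    intro i j
    cases j with
    | zero =>
        rw [hPzero, mem_singleton]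
        constructor
        · rintro rfl; exact hpart_s
        · exact hpart_zero i
    | succ m =>
        rw [hPsucc, mem_sdiff, hpart_le_iff, hpart_le_iff]
        omega
  have hspec : ∀ i m, i ∈ canonTopCum G s c (m+1) → i ∉ canonTopCum G s c m →
      (G.degree i : ℤ) ≤ (c i : ℤ) + (((canonTopCum G s c m).filter (G.Adj i)).card : ℤ) := by
    intro i m h1 h2
    rcases (mem_cum_succ_iff G s c i m).1 h1 with h | ⟨-, h⟩
    · exact absurd h h2
    · exact h
  have hBset : ∀ i m, part i = m + 1 →
      (canonTopCum G s c m).filter (G.Adj i) =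
        univ.filter (fun w => G.Adj i w ∧ part w < part i) := by
    intro i m hm
    ext w
    simp only [mem_filter, mem_univ, true_and]
    rw [hpart_le_iff, hm]
    constructor
    · rintro ⟨h1, h2⟩; exact ⟨h2, by omega⟩
    · rintro ⟨h1, h2⟩; exact ⟨by omega, h1⟩
  have hkey : ∀ i, (G.degree i : ℤ) ≤ (c i : ℤ) +
      ((univ.filter (fun w => G.Adj i w ∧ part w < part i)).card : ℤ) := by
    intro i
    rcases Nat.eq_zero_or_eq_succ_pred (part i) with hpi | hpi
    · have his : i = s := hpart_zero i hpi
      subst his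
      rw [hcs]
      have : (0:ℤ) ≤ ((univ.filter (fun w => G.Adj i w ∧ part w < part i)).card : ℤ) := by
        exact Int.natCast_nonneg _
      omega
    · set m := (part i) - 1 with hm
      have hpi' : part i = m + 1 := hpi
      have h1 : i ∈ canonTopCum G s c (m+1) := hpi' ▸ hpart_mem i
      have h2 : i ∉ canonTopCum G s c m := hpart_min i m (by omega)
      have h3 := hspec i m h1 h2
      rwa [hBset i m hpi'] at h3
  -- counting argument
  have hsumdeg : ∑ i, (G.degree i) = 2 * G.edgeFinset.card :=
    SimpleGraph.sum_degrees_eq_twice_card_edges G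
  have hsumdegZ : ∑ i, (G.degree i : ℤ) = 2 * (G.edgeFinset.card : ℤ) := by
    exact_mod_cast hsumdeg
  have hsumc : (∑ i, (c i : ℤ)) = (G.edgeFinset.card : ℤ) := by
    rw [level] at hmin; linarith
  have hsplit : ∀ i, (univ.filter (fun w => G.Adj i w ∧ part w < part i)).card
      + (univ.filter (fun w => G.Adj i w ∧ part w = part i)).card
      + (univ.filter (fun w => G.Adj i w ∧ part i < part w)).card = G.degree i := by
    intro i
    have hdeg : G.degree i = (univ.filter (G.Adj i)).card := by
      rw [show univ.filter (G.Adj i) = G.neighborFinset i from by ext; simp]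
      rfl
    rw [hdeg, card_filter, card_filter, card_filter, card_filter,
      ← sum_add_distrib, ← sum_add_distrib]
    apply sum_congr rfl
    intro w _
    by_cases hA : G.Adj i w
    · rcases lt_trichotomy (part w) (part i) with h | h | h <;>
        simp only [hA, true_and, if_true] <;>
        [skip; skip; skip] <;>
        · split_ifs <;> omega
    · simp [hA]
  have hSBA : ∑ i, (univ.filter (fun w => G.Adj i w ∧ part w < part i)).card
      = ∑ i, (univ.filter (fun w => G.Adj i w ∧ part i < part w)).card := by
    simp only [card_filter]
    rw [Finset.sum_comm]
    apply sum_congr rfl; intro a _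
    apply sum_congr rfl; intro b _
    rw [G.adj_comm]
  have hSBge : G.edgeFinset.card ≤
      ∑ i, (univ.filter (fun w => G.Adj i w ∧ part w < part i)).card := by
    have h1 : ∑ i, (G.degree i : ℤ) ≤ ∑ i, ((c i : ℤ) +
        ((univ.filter (fun w => G.Adj i w ∧ part w < part i)).card : ℤ)) :=
      sum_le_sum fun i _ => hkey i
    rw [sum_add_distrib, hsumc, hsumdegZ] at h1
    have h3 : (G.edgeFinset.card : ℤ) ≤
        ∑ i, ((univ.filter (fun w => G.Adj i w ∧ part w < part i)).card : ℤ) := by linarith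
    exact_mod_cast h3
  have hSE : ∑ i, (univ.filter (fun w => G.Adj i w ∧ part w = part i)).card = 0 := by
    have h1 : (∑ i, (univ.filter (fun w => G.Adj i w ∧ part w < part i)).card)
        + (∑ i, (univ.filter (fun w => G.Adj i w ∧ part w = part i)).card)
        + (∑ i, (univ.filter (fun w => G.Adj i w ∧ part i < part w)).card)
        = 2 * G.edgeFinset.card := by
      rw [← sum_add_distrib, ← sum_add_distrib, ← hsumdeg]
      exact sum_congr rfl fun i _ => hsplit i
    rw [← hSBA] at h1
    omega
  have hind : ∀ i w, G.Adj i w → part w ≠ part i := by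
    intro i w hA he
    have h0 := (Finset.sum_eq_zero_iff).1 hSE i (mem_univ i)
    rw [card_eq_zero] at h0
    have hmem : w ∈ univ.filter (fun w => G.Adj i w ∧ part w = part i) :=
      mem_filter.mpr ⟨mem_univ w, hA, he⟩
    rw [h0] at hmem
    exact absurd hmem (notMem_empty w)
  have hPsub : ∀ j, canonTopPart G s c j ⊆ canonTopCum G s c j := by
    intro j
    cases j with
    | zero => rw [hPzero, cum_zero]
    | succ m => rw [hPsucc]; exact sdiff_subset
  refine ⟨k, hPzero, ?_, ?_, ?_, ?_, ?_, ?_⟩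
  · -- nonempty
    intro j hj
    cases j with
    | zero => exact ⟨s, by rw [hPzero]; exact mem_singleton_self s⟩
    | succ m =>
        rw [hPsucc, sdiff_nonempty]
        intro hsub
        exact (hgrow m (by omega)).ne (subset_antisymm (hgrow m (by omega)).subset hsub)
  · -- empty beyond k
    intro j hj
    cases j with
    | zero => omega
    | succ m =>
        rw [hPsucc, hstabk m (by omega), hstabk (m+1) (by omega), sdiff_self, bot_eq_empty]
  · -- disjoint
    intro i j hij
    cases j with
    | zero => omega
    | succ m =>
        rw [Finset.disjoint_left]
        intro a hai haj
        rw [hPsucc, mem_sdiff] at haj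
        exact haj.2 (cum_mono G s c (by omega : i ≤ m) (hPsub i hai))
  · -- biUnion covers
    rw [eq_univ_iff_forall]
    intro i
    exact mem_biUnion.mpr ⟨part i, mem_range.mpr (by have := hpart_le_k i; omega),
      (hmemP i (part i)).mpr rfl⟩
  · -- independence within parts
    intro j hj a ha b hb hA
    have h1 := (hmemP a j).1 ha
    have h2 := (hmemP b j).1 hb
    exact hind a b hA (h2.trans h1.symm)
  · -- predecessor adjacency
    intro j hj1 hjk a ha
    cases j with
    | zero => omega
    | succ m =>
        simp only [Nat.add_sub_cancel]
        have hpa : part a = m + 1 := (hmemP a (m+1)).1 ha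
        have h1 : a ∈ canonTopCum G s c (m+1) := hpa ▸ hpart_mem a
        have h2 : a ∉ canonTopCum G s c m := hpart_min a m (by omega)
        have hspeca := hspec a m h1 h2
        cases m with
        | zero =>
            have has : a ≠ s := by intro h; rw [h, hpart_s] at hpa; omega
            have hlt := hclt a has
            have hcard : 1 ≤ ((canonTopCum G s c 0).filter (G.Adj a)).card := by
              by_contra hcc
              push_neg at hcc
              have hc0 : (((canonTopCum G s c 0).filter (G.Adj a)).card : ℤ) = 0 := by
                exact_mod_cast (by omega : ((canonTopCum G s c 0).filter (G.Adj a)).card = 0)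
              rw [hc0] at hspeca
              have : (G.degree a : ℤ) ≤ (c a : ℤ) := by linarith
              have : G.degree a ≤ c a := by exact_mod_cast this
              omega
            obtain ⟨b, hb⟩ := card_pos.mp hcard
            rw [cum_zero, mem_filter, mem_singleton] at hb
            obtain ⟨rfl, hAb⟩ := hb
            exact ⟨b, by rw [hPzero]; exact mem_singleton_self b, hAb⟩
        | succ m' =>
            have ham' : a ∉ canonTopCum G s c m' :=
              fun h => h2 (cum_subset_succ G s c m' h)
            have hnot : ¬ ((G.degree a : ℤ) ≤ (c a : ℤ) +
                (((canonTopCum G s c m').filter (G.Adj a)).card : ℤ)) := by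
              intro hle
              apply h2
              rw [mem_cum_succ_iff]
              exact Or.inr ⟨ham', hle⟩
            by_contra hno
            push_neg at hno
            have hsub : (canonTopCum G s c (m'+1)).filter (G.Adj a) ⊆
                (canonTopCum G s c m').filter (G.Adj a) := by
              intro w hw
              rw [mem_filter] at hw ⊢
              refine ⟨?_, hw.2⟩
              by_contra hwm
              exact hno w (by rw [hPsucc, mem_sdiff]; exact ⟨hw.1, hwm⟩) hw.2
            have hcc := card_le_card hsub
            omega

/-- `P 0, …, P k` is a `(π, s)`-compatible ordered partition of `[n]`:
`P 0 = {s}`; the parts are nonempty, pairwise disjoint, cover everything (and `P j`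
is empty for `j > k`); no two elements of a part form an inversion of `π`; and every
element of `P j` (`j ≥ 1`) forms an inversion with some element of `P (j-1)`. -/
def IsCompatiblePartition {n : ℕ} (π : Equiv.Perm (Fin n)) (s : Fin n)
    (P : ℕ → Finset (Fin n)) (k : ℕ) : Prop :=
  P 0 = {s} ∧
  (∀ j, j ≤ k → (P j).Nonempty) ∧
  (∀ j, k < j → P j = ∅) ∧
  (∀ i j, i < j → Disjoint (P i) (P j)) ∧
  (Finset.range (k + 1)).biUnion P = Finset.univ ∧
  (∀ j, j ≤ k → ∀ a ∈ P j, ∀ b ∈ P j, ¬ (permGraph π).Adj a b) ∧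
  (∀ j, 1 ≤ j → j ≤ k → ∀ a ∈ P j, ∃ b ∈ P (j - 1), (permGraph π).Adj a b)

/-- the canonical toppling of a minimal recurrent configuration on the
permutation graph `G_π` with sink `s` is a `(π, s)`-compatible ordered partition. -/
theorem canonTop_of_minRec_isCompatible {n : ℕ} (π : Equiv.Perm (Fin n)) (s : Fin n)
    (c : Fin n → ℕ) (hrec : IsRecurrent (permGraph π) s c)
    (hmin : level (permGraph π) c = 0) :
    ∃ k : ℕ, IsCompatiblePartition π s (canonTopPart (permGraph π) s c) k := by
  obtain ⟨k, h⟩ := main_general (permGraph π) s c hrec hmin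
  exact ⟨k, h⟩
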